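/- Fix m ∈ (0,1], E < 0, and let Γ be the regularized four-degree-of-freedom rhomboidal Hamiltonian, S = diag(−G,−G,G,G) with G = diag(1,−1), and J the standard 8×8 symplectic matrix. Let γ : ℝ → ℝ⁸ be a solution of z' = J∇Γ(z) whose image lies in the open set where Γ is smooth (i.e. where ρ₁²+ρ₂² > 4|𝐐| and (ρ₁,ρ₂) ≠ (0,0)), and suppose that for some s₀ > 0 and some ζ₄, ζ₁ ∈ ℝ, γ(0) = (0,0,0,ζ₄,√8,0,0,0) and γ(s₀) = (ζ₁,0,0,0,0,0,0,√(8m³)). Then γ is periodic with period T = 4s₀, and for all s ∈ ℝ, −Sγ(T/2 − s) = γ(s) and Sγ(T − s) = γ(s). -/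

import Mathlib

open Matrix

noncomputable section

/-- The gradient of `f : (ι → ℝ) → ℝ` as the vector of partial derivatives. -/
def grad {ι : Type*} [Fintype ι] [DecidableEq ι] (f : (ι → ℝ) → ℝ) (z : ι → ℝ) : ι → ℝ :=
  fun i => fderiv ℝ f z (Pi.single i 1)

/-- The standard `2n × 2n` symplectic matrix `[[0, I], [-I, 0]]`. -/
def Jmat (n : ℕ) : Matrix (Fin n ⊕ Fin n) (Fin n ⊕ Fin n) ℝ :=
  Matrix.fromBlocks 0 1 (-1) 0

/-- `ρ₁ = Q₁² + Q₂²`, in coordinates `(Q₁,Q₂,Q₃,Q₄,P₁,P₂,P₃,P₄)` with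
`Qᵢ = z (Sum.inl (i-1))` and `Pᵢ = z (Sum.inr (i-1))`. -/
def rho1 (z : (Fin 4 ⊕ Fin 4) → ℝ) : ℝ := (z (Sum.inl 0)) ^ 2 + (z (Sum.inl 1)) ^ 2

/-- `ρ₂ = Q₃² + Q₄²`. -/
def rho2 (z : (Fin 4 ⊕ Fin 4) → ℝ) : ℝ := (z (Sum.inl 2)) ^ 2 + (z (Sum.inl 3)) ^ 2

/-- `𝐐 = Q₁²Q₃Q₄ − Q₂²Q₃Q₄ − Q₁Q₂Q₃² + Q₁Q₂Q₄²`. -/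
def QQ (z : (Fin 4 ⊕ Fin 4) → ℝ) : ℝ :=
  (z (Sum.inl 0)) ^ 2 * z (Sum.inl 2) * z (Sum.inl 3)
    - (z (Sum.inl 1)) ^ 2 * z (Sum.inl 2) * z (Sum.inl 3)
    - z (Sum.inl 0) * z (Sum.inl 1) * (z (Sum.inl 2)) ^ 2
    + z (Sum.inl 0) * z (Sum.inl 1) * (z (Sum.inl 3)) ^ 2

/-- The regularized four-degree-of-freedom rhomboidal Hamiltonian in extended
phase space, with mass parameter `m` and energy parameter `E`. -/
def Gamma4 (m E : ℝ) (z : (Fin 4 ⊕ Fin 4) → ℝ) : ℝ :=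
  (rho2 z / 16) * ((z (Sum.inr 0)) ^ 2 + (z (Sum.inr 1)) ^ 2)
    + (rho1 z / (16 * m)) * ((z (Sum.inr 2)) ^ 2 + (z (Sum.inr 3)) ^ 2)
    - rho2 z / 2 - m ^ 2 * rho1 z / 2
    - 2 * m * rho1 z * rho2 z *
        (1 / Real.sqrt ((rho1 z) ^ 2 + (rho2 z) ^ 2 - 4 * QQ z)
          + 1 / Real.sqrt ((rho1 z) ^ 2 + (rho2 z) ^ 2 + 4 * QQ z))
    - E * rho1 z * rho2 z

/-- The symmetry matrix `S = diag(−G, −G, G, G)` with `G = diag(1,−1)`. -/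
def S8 : Matrix (Fin 4 ⊕ Fin 4) (Fin 4 ⊕ Fin 4) ℝ :=
  Matrix.fromBlocks (Matrix.diagonal ![-1, 1, -1, 1]) 0 0 (Matrix.diagonal ![1, -1, 1, -1])

namespace RhombAux

abbrev ι8 := Fin 4 ⊕ Fin 4
abbrev EE := ι8 → ℝ

def sg : ι8 → ℝ := Sum.elim ![-1, 1, -1, 1] ![1, -1, 1, -1]

lemma sg_sq (i : ι8) : sg i * sg i = 1 := by
  rcases i with x | x <;> fin_cases x <;> norm_num [sg]

lemma sg_inr (i : Fin 4) : sg (Sum.inr i) = -sg (Sum.inl i) := by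
  fin_cases i <;> norm_num [sg]

lemma S8_mulVec (v : EE) : S8.mulVec v = fun i => sg i * v i := by
  have h : S8 = Matrix.diagonal sg := by
    rw [S8, sg, ← Matrix.fromBlocks_diagonal]
  funext i
  rw [h, Matrix.mulVec_diagonal]

lemma Jmat_mulVec (v : EE) :
    (Jmat 4).mulVec v = Sum.elim (fun i => v (Sum.inr i)) (fun i => -(v (Sum.inl i))) := by
  have h : v = Sum.elim (fun i => v (Sum.inl i)) (fun i => v (Sum.inr i)) := by
    funext i; cases i <;> rfl
  rw [Jmat, h, Matrix.fromBlocks_mulVec]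
  funext i
  cases i <;> simp [Matrix.neg_mulVec]

lemma J_sg (v : EE) :
    (Jmat 4).mulVec (fun i => sg i * v i) = fun i => -(sg i * (Jmat 4).mulVec v i) := by
  rw [Jmat_mulVec, Jmat_mulVec]
  funext i
  rcases i with x | x
  · simp [sg_inr x]
  · simp [sg_inr x]

/-- sign-flip continuous linear map -/
def sclm (d : ι8 → ℝ) : EE →L[ℝ] EE :=
  ContinuousLinearMap.pi fun i => d i • ContinuousLinearMap.proj i

lemma sclm_apply (d : ι8 → ℝ) (z : EE) (i : ι8) : sclm d z i = d i * z i := rfl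

/-- sign-flip continuous linear equiv -/
def sce (d : ι8 → ℝ) (hd : ∀ i, d i * d i = 1) : EE ≃L[ℝ] EE :=
  ContinuousLinearEquiv.equivOfInverse (sclm d) (sclm d)
    (fun z => by funext i; simp [sclm_apply, ← mul_assoc, hd i])
    (fun z => by funext i; simp [sclm_apply, ← mul_assoc, hd i])

lemma sce_apply (d : ι8 → ℝ) (hd : ∀ i, d i * d i = 1) (z : EE) :
    sce d hd z = fun i => d i * z i := rfl

lemma grad_sign (d : ι8 → ℝ) (hd : ∀ i, d i * d i = 1) (f : EE → ℝ)
    (hf : ∀ z, f (fun i => d i * z i) = f z) (z : EE) :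
    grad f (fun j => d j * z j) = fun i => d i * grad f z i := by
  set L := sce d hd with hLdef
  have hL : f ∘ L = f := funext fun w => hf w
  have h1 : fderiv ℝ f z = (fderiv ℝ f (L z)).comp (L : EE →L[ℝ] EE) := by
    conv_lhs => rw [← hL]
    exact L.comp_right_fderiv
  have hsingle : ∀ i : ι8, (L : EE →L[ℝ] EE) (Pi.single i 1) = d i • (Pi.single i 1 : EE) := by
    intro i
    funext j
    by_cases h : j = i
    · subst h; simp [hLdef, sce_apply]
    · simp [hLdef, sce_apply, Pi.single_apply, h]
  have key : ∀ i, grad f z i = d i * grad f (L z) i := by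
    intro i
    rw [grad, h1]
    simp only [ContinuousLinearMap.comp_apply]
    rw [hsingle i, _root_.map_smul]
    simp [grad, smul_eq_mul]
  funext i
  have h2 : grad f (fun j => d j * z j) i = grad f (L z) i := rfl
  rw [h2]
  have := key i
  have h3 : d i * grad f z i = d i * (d i * grad f (L z) i) := by rw [← this]
  rw [← mul_assoc, hd i, one_mul] at h3
  rw [h3]


section Evals
@[simp] lemma sg_il0 : sg (Sum.inl 0) = -1 := rfl
@[simp] lemma sg_il1 : sg (Sum.inl 1) = 1 := rfl
@[simp] lemma sg_il2 : sg (Sum.inl 2) = -1 := rfl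
@[simp] lemma sg_il3 : sg (Sum.inl 3) = 1 := rfl
@[simp] lemma sg_ir0 : sg (Sum.inr 0) = 1 := rfl
@[simp] lemma sg_ir1 : sg (Sum.inr 1) = -1 := rfl
@[simp] lemma sg_ir2 : sg (Sum.inr 2) = 1 := rfl
@[simp] lemma sg_ir3 : sg (Sum.inr 3) = -1 := rfl
end Evals

/-- negated sign vector -/
def ng : ι8 → ℝ := fun i => -sg i

lemma ng_sq (i : ι8) : ng i * ng i = 1 := by
  simp only [ng]; rw [neg_mul_neg]; exact sg_sq i

lemma J_ng (v : EE) :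
    (Jmat 4).mulVec (fun i => ng i * v i) = fun i => -(ng i * (Jmat 4).mulVec v i) := by
  have h : (fun i => ng i * v i) = -(fun i => sg i * v i) := by
    funext i; simp [ng]
  rw [h, Matrix.mulVec_neg, J_sg]
  funext i; simp [ng]

lemma rho1_sg (z : EE) : rho1 (fun i => sg i * z i) = rho1 z := by
  simp only [rho1, sg_il0, sg_il1]; ring

lemma rho2_sg (z : EE) : rho2 (fun i => sg i * z i) = rho2 z := by
  simp only [rho2, sg_il2, sg_il3]; ring

lemma QQ_sg (z : EE) : QQ (fun i => sg i * z i) = -QQ z := by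
  simp only [QQ, sg_il0, sg_il1, sg_il2, sg_il3]; ring

lemma rho1_ng (z : EE) : rho1 (fun i => ng i * z i) = rho1 z := by
  simp only [rho1, ng, sg_il0, sg_il1]; ring

lemma rho2_ng (z : EE) : rho2 (fun i => ng i * z i) = rho2 z := by
  simp only [rho2, ng, sg_il2, sg_il3]; ring

lemma QQ_ng (z : EE) : QQ (fun i => ng i * z i) = -QQ z := by
  simp only [QQ, ng, sg_il0, sg_il1, sg_il2, sg_il3]; ring

lemma Gamma4_sg (m E : ℝ) (z : EE) : Gamma4 m E (fun i => sg i * z i) = Gamma4 m E z := by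
  simp only [Gamma4, rho1_sg, rho2_sg, QQ_sg, sg_ir0, sg_ir1, sg_ir2, sg_ir3]
  rw [show rho1 z ^ 2 + rho2 z ^ 2 - 4 * -QQ z = rho1 z ^ 2 + rho2 z ^ 2 + 4 * QQ z by ring,
    show rho1 z ^ 2 + rho2 z ^ 2 + 4 * -QQ z = rho1 z ^ 2 + rho2 z ^ 2 - 4 * QQ z by ring]
  ring

lemma Gamma4_ng (m E : ℝ) (z : EE) : Gamma4 m E (fun i => ng i * z i) = Gamma4 m E z := by
  simp only [Gamma4, rho1_ng, rho2_ng, QQ_ng]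
  simp only [ng, sg_ir0, sg_ir1, sg_ir2, sg_ir3]
  rw [show rho1 z ^ 2 + rho2 z ^ 2 - 4 * -QQ z = rho1 z ^ 2 + rho2 z ^ 2 + 4 * QQ z by ring,
    show rho1 z ^ 2 + rho2 z ^ 2 + 4 * -QQ z = rho1 z ^ 2 + rho2 z ^ 2 - 4 * QQ z by ring]
  ring


lemma contDiff_coord (i : ι8) : ContDiff ℝ 2 (fun z : EE => z i) :=
  (ContinuousLinearMap.proj i : EE →L[ℝ] ℝ).contDiff

lemma contDiff_rho1 : ContDiff ℝ 2 rho1 := by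
  unfold rho1
  exact ((contDiff_coord _).pow 2).add ((contDiff_coord _).pow 2)

lemma contDiff_rho2 : ContDiff ℝ 2 rho2 := by
  unfold rho2
  exact ((contDiff_coord _).pow 2).add ((contDiff_coord _).pow 2)

lemma contDiff_QQ : ContDiff ℝ 2 QQ := by
  unfold QQ
  exact (((((contDiff_coord _).pow 2).mul (contDiff_coord _)).mul (contDiff_coord _)).sub
      ((((contDiff_coord _).pow 2).mul (contDiff_coord _)).mul (contDiff_coord _))).sub
      (((contDiff_coord _).mul (contDiff_coord _)).mul ((contDiff_coord _).pow 2)) |>.add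
      (((contDiff_coord _).mul (contDiff_coord _)).mul ((contDiff_coord _).pow 2))

lemma contDiffAt_Gamma4 (m E : ℝ) {z : EE} (hz : 4 * |QQ z| < rho1 z ^ 2 + rho2 z ^ 2) :
    ContDiffAt ℝ 2 (Gamma4 m E) z := by
  have habs1 := le_abs_self (QQ z)
  have habs2 := neg_abs_le (QQ z)
  have hq1 : 0 < rho1 z ^ 2 + rho2 z ^ 2 - 4 * QQ z := by linarith
  have hq2 : 0 < rho1 z ^ 2 + rho2 z ^ 2 + 4 * QQ z := by linarith
  have hu : ContDiff ℝ 2 (fun w : EE => rho1 w ^ 2 + rho2 w ^ 2 - 4 * QQ w) :=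
    ((contDiff_rho1.pow 2).add (contDiff_rho2.pow 2)).sub (contDiff_const.mul contDiff_QQ)
  have hw : ContDiff ℝ 2 (fun w : EE => rho1 w ^ 2 + rho2 w ^ 2 + 4 * QQ w) :=
    ((contDiff_rho1.pow 2).add (contDiff_rho2.pow 2)).add (contDiff_const.mul contDiff_QQ)
  have hs1 : ContDiffAt ℝ 2 (fun w : EE => 1 / Real.sqrt (rho1 w ^ 2 + rho2 w ^ 2 - 4 * QQ w)) z := by
    have h := (Real.contDiffAt_sqrt (ne_of_gt hq1)).comp z hu.contDiffAt
    have hne : Real.sqrt (rho1 z ^ 2 + rho2 z ^ 2 - 4 * QQ z) ≠ 0 :=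
      ne_of_gt (Real.sqrt_pos.2 hq1)
    have h2 : ContDiffAt ℝ 2 (fun w : EE => Real.sqrt (rho1 w ^ 2 + rho2 w ^ 2 - 4 * QQ w)) z := h
    simp only [one_div]; exact h2.inv hne
  have hs2 : ContDiffAt ℝ 2 (fun w : EE => 1 / Real.sqrt (rho1 w ^ 2 + rho2 w ^ 2 + 4 * QQ w)) z := by
    have h := (Real.contDiffAt_sqrt (ne_of_gt hq2)).comp z hw.contDiffAt
    have hne : Real.sqrt (rho1 z ^ 2 + rho2 z ^ 2 + 4 * QQ z) ≠ 0 :=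
      ne_of_gt (Real.sqrt_pos.2 hq2)
    have h2 : ContDiffAt ℝ 2 (fun w : EE => Real.sqrt (rho1 w ^ 2 + rho2 w ^ 2 + 4 * QQ w)) z := h
    simp only [one_div]; exact h2.inv hne
  unfold Gamma4
  apply ContDiffAt.sub
  apply ContDiffAt.sub
  apply ContDiffAt.sub
  apply ContDiffAt.sub
  apply ContDiffAt.add
  · exact ((contDiff_rho2.div_const 16).mul
      (((contDiff_coord _).pow 2).add ((contDiff_coord _).pow 2))).contDiffAt
  · exact ((contDiff_rho1.div_const (16 * m)).mul
      (((contDiff_coord _).pow 2).add ((contDiff_coord _).pow 2))).contDiffAt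
  · exact (contDiff_rho2.div_const 2).contDiffAt
  · exact ((contDiff_const.mul contDiff_rho1).div_const 2).contDiffAt
  · exact ((((contDiff_const.mul contDiff_rho1).mul contDiff_rho2).contDiffAt).mul (hs1.add hs2))
  · exact ((contDiff_const.mul contDiff_rho1).mul contDiff_rho2).contDiffAt

/-- The vector field of the regularized system. -/
def Fv (m E : ℝ) : EE → EE := fun z => (Jmat 4).mulVec (grad (Gamma4 m E) z)

lemma contDiffAt_Fv (m E : ℝ) {z : EE} (hz : 4 * |QQ z| < rho1 z ^ 2 + rho2 z ^ 2) :
    ContDiffAt ℝ 1 (Fv m E) z := by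
  have hgrad : ContDiffAt ℝ 1 (grad (Gamma4 m E)) z := by
    apply contDiffAt_pi.2
    intro i
    have h1 : ContDiffAt ℝ 1 (fderiv ℝ (Gamma4 m E)) z :=
      (contDiffAt_Gamma4 m E hz).fderiv_right (le_of_eq one_add_one_eq_two)
    exact h1.clm_apply contDiffAt_const
  have hJ : ContDiff ℝ 1 (fun v : EE => (Jmat 4).mulVec v) := by
    have h := (LinearMap.toContinuousLinearMap ((Jmat 4).mulVecLin)).contDiff (n := (1 : ℕ))
    exact h
  have := hJ.contDiffAt.comp z hgrad
  exact this

lemma transformed_sol (m E : ℝ) (d : ι8 → ℝ) (hd : ∀ i, d i * d i = 1)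
    (hG : ∀ z : EE, Gamma4 m E (fun i => d i * z i) = Gamma4 m E z)
    (hJd : ∀ v : EE, (Jmat 4).mulVec (fun i => d i * v i) = fun i => -(d i * (Jmat 4).mulVec v i))
    (γ : ℝ → EE) (hsol : ∀ s, HasDerivAt γ (Fv m E (γ s)) s) (c : ℝ) (s : ℝ) :
    HasDerivAt (fun t : ℝ => (fun i => d i * γ (c - t) i : EE))
      (Fv m E (fun i => d i * γ (c - s) i)) s := by
  have hinner : HasDerivAt (fun t : ℝ => c - t) (-1 : ℝ) s := (hasDerivAt_id s).const_sub c
  have h1 : HasDerivAt (fun t : ℝ => γ (c - t)) ((-1 : ℝ) • Fv m E (γ (c - s))) s :=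
    (hsol (c - s)).scomp s hinner
  have h2 := (sclm d).hasFDerivAt.comp_hasDerivAt s h1
  have hkey : Fv m E (fun i => d i * γ (c - s) i) = sclm d ((-1 : ℝ) • Fv m E (γ (c - s))) := by
    rw [Fv]
    rw [grad_sign d hd _ hG]
    rw [hJd]
    funext i
    simp only [sclm_apply, Pi.smul_apply, smul_eq_mul]
    rw [Fv]
    ring
  rw [hkey]
  exact h2

lemma ode_unique {F : EE → EE} {f g : ℝ → EE}
    (hf : ∀ t, HasDerivAt f (F (f t)) t) (hg : ∀ t, HasDerivAt g (F (g t)) t)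
    (hlip : ∀ t : ℝ, ∃ K : NNReal, ∃ U ∈ nhds (f t), LipschitzOnWith K F U)
    {t₀ : ℝ} (heq : f t₀ = g t₀) : f = g := by
  have hclopen : IsClopen {t | f t = g t} := by
    constructor
    · exact isClosed_eq (continuous_iff_continuousAt.2 fun t => (hf t).continuousAt)
        (continuous_iff_continuousAt.2 fun t => (hg t).continuousAt)
    · rw [isOpen_iff_mem_nhds]
      intro t₁ ht₁
      obtain ⟨K, U, hU, hlipU⟩ := hlip t₁
      have hfU : ∀ᶠ t in nhds t₁, HasDerivAt f (F (f t)) t ∧ f t ∈ U :=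
        ((hf t₁).continuousAt.eventually_mem hU).mono fun t ht => ⟨hf t, ht⟩
      have hgU : ∀ᶠ t in nhds t₁, HasDerivAt g (F (g t)) t ∧ g t ∈ U := by
        have hU' : U ∈ nhds (g t₁) := by
          have : f t₁ = g t₁ := ht₁
          rwa [this] at hU
        exact ((hg t₁).continuousAt.eventually_mem hU').mono fun t ht => ⟨hg t, ht⟩
      exact ODE_solution_unique_of_eventually (v := fun _ => F) (s := fun _ => U) (Filter.Eventually.of_forall fun _ => hlipU) hfU hgU ht₁
  have huniv : {t | f t = g t} = Set.univ := hclopen.eq_univ ⟨t₀, heq⟩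
  funext t
  exact Set.eq_univ_iff_forall.mp huniv t

end RhombAux

open RhombAux

/-- A solution of the regularized 4DF rhomboidal system starting at a collision of
the mass-1 bodies at `s = 0` and reaching a collision of the mass-`m` bodies at
`s = s₀` extends to a `T = 4s₀`-periodic orbit with time-reversing symmetries
`S` and `−S`: for all `s`, `−Sγ(T/2 − s) = γ(s)` and `Sγ(T − s) = γ(s)`. -/
theorem rhomboidal_orbit_periodic_and_symmetric (m E : ℝ)
    (hm : m ∈ Set.Ioc (0 : ℝ) 1) (hE : E < 0)
    (γ : ℝ → (Fin 4 ⊕ Fin 4) → ℝ)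
    (hdom : ∀ s : ℝ, (rho1 (γ s)) ^ 2 + (rho2 (γ s)) ^ 2 > 4 * |QQ (γ s)| ∧
      ¬(rho1 (γ s) = 0 ∧ rho2 (γ s) = 0))
    (hsol : ∀ s : ℝ, HasDerivAt γ ((Jmat 4).mulVec (grad (Gamma4 m E) (γ s))) s)
    (s₀ : ℝ) (hs₀ : 0 < s₀) (ζ₄ ζ₁ : ℝ)
    (h0 : γ 0 = Sum.elim (![0, 0, 0, ζ₄] : Fin 4 → ℝ) ![Real.sqrt 8, 0, 0, 0])
    (h1 : γ s₀ = Sum.elim (![ζ₁, 0, 0, 0] : Fin 4 → ℝ) ![0, 0, 0, Real.sqrt (8 * m ^ 3)]) :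
    Function.Periodic γ (4 * s₀) ∧
    (∀ s : ℝ, -S8.mulVec (γ (4 * s₀ / 2 - s)) = γ s) ∧
    (∀ s : ℝ, S8.mulVec (γ (4 * s₀ - s)) = γ s) := by
  have hFsol : ∀ s, HasDerivAt γ (Fv m E (γ s)) s := fun s => hsol s
  have hlip : ∀ t : ℝ, ∃ K : NNReal, ∃ U ∈ nhds (γ t), LipschitzOnWith K (Fv m E) U :=
    fun t => (contDiffAt_Fv m E (hdom t).1).exists_lipschitzOnWith
  -- first symmetry: γ s = S γ(-s)
  have hδ1 : ∀ s, HasDerivAt (fun t : ℝ => (fun i => sg i * γ (0 - t) i : EE))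
      (Fv m E (fun i => sg i * γ (0 - s) i)) s :=
    transformed_sol m E sg sg_sq (Gamma4_sg m E) J_sg γ hFsol 0
  have heq0 : γ 0 = (fun i => sg i * γ ((0 : ℝ) - 0) i : EE) := by
    rw [show (0 : ℝ) - 0 = 0 by ring]
    funext i
    rw [h0]
    rcases i with x | x <;> fin_cases x <;> simp [sg]
  have hP1 : γ = fun s : ℝ => (fun i => sg i * γ (0 - s) i : EE) :=
    ode_unique hFsol hδ1 hlip (t₀ := 0) heq0
  have g1 : ∀ (s : ℝ) (i : ι8), γ s i = sg i * γ (-s) i := by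
    intro s i
    conv_lhs => rw [hP1]
    norm_num
  -- second symmetry: γ s = -S γ(2s₀ - s)
  have hδ2 : ∀ s, HasDerivAt (fun t : ℝ => (fun i => ng i * γ (2 * s₀ - t) i : EE))
      (Fv m E (fun i => ng i * γ (2 * s₀ - s) i)) s :=
    transformed_sol m E ng ng_sq (Gamma4_ng m E) J_ng γ hFsol (2 * s₀)
  have heqs : γ s₀ = (fun i => ng i * γ (2 * s₀ - s₀) i : EE) := by
    rw [show 2 * s₀ - s₀ = s₀ by ring]
    funext i
    rw [h1]
    rcases i with x | x <;> fin_cases x <;> simp [ng, sg]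
  have hP2 : γ = fun s : ℝ => (fun i => ng i * γ (2 * s₀ - s) i : EE) :=
    ode_unique hFsol hδ2 hlip (t₀ := s₀) heqs
  have g2 : ∀ (s : ℝ) (i : ι8), γ s i = ng i * γ (2 * s₀ - s) i := by
    intro s i
    conv_lhs => rw [hP2]
  -- antiperiodicity
  have hneg : ∀ s : ℝ, γ (s + 2 * s₀) = -γ s := by
    intro s
    funext i
    have h2 := g2 (s + 2 * s₀) i
    rw [show 2 * s₀ - (s + 2 * s₀) = -s by ring] at h2
    have h1' := g1 s i
    rw [h2, Pi.neg_apply, h1']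
    simp [ng]
  have hper : Function.Periodic γ (4 * s₀) := by
    intro s
    have a1 := hneg (s + 2 * s₀)
    rw [show s + 2 * s₀ + 2 * s₀ = s + 4 * s₀ by ring] at a1
    rw [a1, hneg s, neg_neg]
  refine ⟨hper, ?_, ?_⟩
  · intro s
    rw [show 4 * s₀ / 2 - s = 2 * s₀ - s by ring]
    funext i
    rw [Pi.neg_apply]
    have := congrFun (S8_mulVec (γ (2 * s₀ - s))) i
    rw [this, g2 s i]
    simp [ng]
  · intro s
    have hp : γ (4 * s₀ - s) = γ (-s) := by
      have := hper (-s)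
      rwa [show -s + 4 * s₀ = 4 * s₀ - s by ring] at this
    funext i
    rw [congrFun (S8_mulVec (γ (4 * s₀ - s))) i, hp]
    exact (g1 s i).symm
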